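/- arXiv:1305.0220 — 4 statements merged into one kernel-verified Lean document; each statement's English description precedes it below -/
import Mathlib

section
/- Suppose X_i ~ N(0,1) for i in S_0 and X_i ~ N(μ,1) for i in S_1, all independent, with |S_0|, |S_1| → ∞. If μ ≥ sqrt(2(1+ε) log |S_0|) - sqrt(2 log |S_1|) for some fixed ε > 0, then P(max_{i∈S_1} X_i ≤ max_{i∈S_0} X_i) → 0; that is, the signal subset exists with probability tending to 1. -/
open MeasureTheory ProbabilityTheory Filter Set Real
open scoped ENNReal NNReal

lemma gauss_tail_upper {t : ℝ} (ht : 0 ≤ t) :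
    gaussianReal 0 1 (Ici t) ≤ ENNReal.ofReal (Real.exp (-(t^2)/2)) := by
  rw [gaussianReal_apply 0 one_ne_zero]
  have key : ∀ x ∈ Ici t, gaussianPDF 0 1 x
      ≤ ENNReal.ofReal (Real.exp (-(t^2)/2)) * gaussianPDF t 1 x := by
    intro x hx
    simp only [gaussianPDF, ← ENNReal.ofReal_mul (Real.exp_nonneg _)]
    apply ENNReal.ofReal_le_ofReal
    simp only [gaussianPDFReal, NNReal.coe_one, mul_one, sub_zero]
    have heq : rexp (-(t^2)/2) * ((Real.sqrt (2*π))⁻¹ * rexp (-(x-t)^2/2))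
        = (Real.sqrt (2*π))⁻¹ * rexp (-(t^2)/2 + -(x-t)^2/2) := by
      rw [Real.exp_add]; ring
    rw [heq]
    apply mul_le_mul_of_nonneg_left _ (by positivity)
    apply Real.exp_le_exp.2
    have : t ≤ x := hx
    nlinarith
  calc ∫⁻ x in Ici t, gaussianPDF 0 1 x
      ≤ ∫⁻ x in Ici t, ENNReal.ofReal (Real.exp (-(t^2)/2)) * gaussianPDF t 1 x :=
        setLIntegral_mono ((measurable_gaussianPDF t 1).const_mul _) key
    _ = ENNReal.ofReal (Real.exp (-(t^2)/2)) * ∫⁻ x in Ici t, gaussianPDF t 1 x :=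
        lintegral_const_mul _ (measurable_gaussianPDF t 1)
    _ ≤ ENNReal.ofReal (Real.exp (-(t^2)/2)) * ∫⁻ x, gaussianPDF t 1 x := by
        gcongr
        exact Measure.restrict_le_self
    _ = ENNReal.ofReal (Real.exp (-(t^2)/2)) := by
        rw [lintegral_gaussianPDF_eq_one t one_ne_zero, mul_one]

lemma gauss_tail_lower {s : ℝ} (hs : 0 ≤ s) :
    ENNReal.ofReal (Real.exp (-((s+1)^2)/2) * (Real.sqrt (2*π))⁻¹)
      ≤ gaussianReal 0 1 (Ioi s) := by
  rw [gaussianReal_apply 0 one_ne_zero]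
  have h1 : ∫⁻ x in Ioc s (s+1), gaussianPDF 0 1 x ≤ ∫⁻ x in Ioi s, gaussianPDF 0 1 x :=
    lintegral_mono_set Ioc_subset_Ioi_self
  refine le_trans ?_ h1
  have key : ∀ x ∈ Ioc s (s+1),
      ENNReal.ofReal (Real.exp (-((s+1)^2)/2) * (Real.sqrt (2*π))⁻¹) ≤ gaussianPDF 0 1 x := by
    intro x hx
    apply ENNReal.ofReal_le_ofReal
    simp only [gaussianPDFReal, NNReal.coe_one, mul_one, sub_zero]
    rw [mul_comm]
    apply mul_le_mul_of_nonneg_left _ (by positivity)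
    apply Real.exp_le_exp.2
    have h1 := hx.1
    have h2 := hx.2
    nlinarith
  calc ENNReal.ofReal (Real.exp (-((s+1)^2)/2) * (Real.sqrt (2*π))⁻¹)
      = ENNReal.ofReal (Real.exp (-((s+1)^2)/2) * (Real.sqrt (2*π))⁻¹) * volume (Ioc s (s+1)) := by
        rw [Real.volume_Ioc]
        norm_num
    _ = ∫⁻ _x in Ioc s (s+1), ENNReal.ofReal (Real.exp (-((s+1)^2)/2) * (Real.sqrt (2*π))⁻¹) := by
        rw [setLIntegral_const]
    _ ≤ ∫⁻ x in Ioc s (s+1), gaussianPDF 0 1 x := by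
        apply setLIntegral_mono (measurable_gaussianPDF 0 1) key

lemma tail_prob_pos (s : ℝ) : 0 ≤ Real.exp (-((s+1)^2)/2) * (Real.sqrt (2*π))⁻¹ := by positivity

lemma tail_prob_le_one (s : ℝ) : Real.exp (-((s+1)^2)/2) * (Real.sqrt (2*π))⁻¹ ≤ 1 := by
  apply mul_le_one₀
  · apply Real.exp_le_one_iff.2; nlinarith [sq_nonneg (s+1)]
  · positivity
  · rw [inv_le_one_iff₀]
    right
    rw [Real.one_le_sqrt]
    nlinarith [Real.pi_gt_three]

lemma signal_term_bound (μ t : ℝ) (n₁ : ℕ) :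
    (gaussianReal μ 1 (Iic t))^n₁
      ≤ ENNReal.ofReal (Real.exp (-((n₁ : ℝ) *
          (Real.exp (-((max (t-μ) 0 + 1)^2)/2) * (Real.sqrt (2*π))⁻¹)))) := by
  set p : ℝ := Real.exp (-((max (t-μ) 0 + 1)^2)/2) * (Real.sqrt (2*π))⁻¹ with hp
  have hp0 : 0 ≤ p := tail_prob_pos _
  have hp1 : p ≤ 1 := tail_prob_le_one _
  have hlow : ENNReal.ofReal p ≤ gaussianReal μ 1 (Ioi t) := by
    have hmap : gaussianReal μ 1 = Measure.map (· + μ) (gaussianReal 0 1) := by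
      rw [gaussianReal_map_add_const, zero_add]
    rw [hmap, Measure.map_apply (measurable_add_const μ) measurableSet_Ioi]
    have hpre : ((· + μ) ⁻¹' Ioi t) = Ioi (t - μ) := by
      ext x; simp [sub_lt_iff_lt_add]
    rw [hpre]
    refine le_trans (gauss_tail_lower (le_max_right (t-μ) 0)) ?_
    exact measure_mono (Ioi_subset_Ioi (le_max_left _ _))
  have hIic : gaussianReal μ 1 (Iic t) ≤ ENNReal.ofReal (1 - p) := by
    have : gaussianReal μ 1 (Iic t) = 1 - gaussianReal μ 1 (Ioi t) := by
      rw [← compl_Ioi, prob_compl_eq_one_sub measurableSet_Ioi]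
    rw [this, ENNReal.ofReal_sub _ hp0, ENNReal.ofReal_one]
    exact tsub_le_tsub_left hlow 1
  calc (gaussianReal μ 1 (Iic t))^n₁ ≤ (ENNReal.ofReal (1 - p))^n₁ := by gcongr
    _ = ENNReal.ofReal ((1 - p)^n₁) := (ENNReal.ofReal_pow (by linarith) n₁).symm
    _ ≤ ENNReal.ofReal (Real.exp (-((n₁ : ℝ) * p))) := by
        apply ENNReal.ofReal_le_ofReal
        have h1 : (1 - p)^n₁ ≤ (Real.exp (-p))^n₁ := by
          apply pow_le_pow_left₀ (by linarith)
          linarith [Real.add_one_le_exp (-p)]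
        refine le_trans h1 ?_
        rw [← Real.exp_nat_mul]
        apply Real.exp_le_exp.2
        rw [mul_neg]

lemma key_bound {Ω : Type*} [MeasurableSpace Ω] (P : Measure Ω) [IsProbabilityMeasure P]
    {n₀ n₁ : ℕ} (hn₀ : 1 ≤ n₀) (hn₁ : 1 ≤ n₁) (μ : ℝ)
    (X : (Fin n₀ ⊕ Fin n₁) → Ω → ℝ) (hmeas : ∀ i, Measurable (X i))
    (hindep : iIndepFun X P)
    (hnoise : ∀ i, Measure.map (X (Sum.inl i)) P = gaussianReal 0 1)
    (hsignal : ∀ j, Measure.map (X (Sum.inr j)) P = gaussianReal μ 1)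
    (t : ℝ) (ht : 0 ≤ t) :
    P {ω | (⨆ j, X (Sum.inr j) ω) ≤ ⨆ i, X (Sum.inl i) ω}
      ≤ (gaussianReal μ 1 (Iic t))^n₁ + n₀ * ENNReal.ofReal (Real.exp (-(t^2)/2)) := by
  haveI : NeZero n₀ := ⟨by omega⟩
  haveI : NeZero n₁ := ⟨by omega⟩
  have hsub : {ω | (⨆ j, X (Sum.inr j) ω) ≤ ⨆ i, X (Sum.inl i) ω}
      ⊆ (⋂ j, X (Sum.inr j) ⁻¹' Iic t) ∪ (⋃ i, X (Sum.inl i) ⁻¹' Ioi t) := by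
    intro ω hω
    by_cases hc : (⨆ i, X (Sum.inl i) ω) ≤ t
    · left
      simp only [mem_iInter, mem_preimage, mem_Iic]
      intro j
      exact le_trans (le_trans (le_ciSup (f := fun j => X (Sum.inr j) ω) (Set.Finite.bddAbove (finite_range _)) j) hω) hc
    · right
      push_neg at hc
      rw [lt_ciSup_iff (Set.Finite.bddAbove (finite_range _))] at hc
      obtain ⟨i, hi⟩ := hc
      exact mem_iUnion.2 ⟨i, hi⟩
  refine le_trans (le_trans (measure_mono hsub) (measure_union_le _ _)) ?_
  have hA : P (⋂ j, X (Sum.inr j) ⁻¹' Iic t) = (gaussianReal μ 1 (Iic t))^n₁ := by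
    have := hindep.measure_inter_preimage_eq_mul
      (Finset.univ.map ⟨Sum.inr, Sum.inr_injective⟩) (sets := fun _ => Iic t)
      (fun i _ => measurableSet_Iic)
    rw [show (⋂ i ∈ Finset.univ.map ⟨Sum.inr, Sum.inr_injective⟩, X i ⁻¹' Iic t)
        = ⋂ j, X (Sum.inr j) ⁻¹' Iic t by
      ext ω; simp] at this
    rw [this, Finset.prod_map]
    simp only [Function.Embedding.coeFn_mk]
    have : ∀ j : Fin n₁, P (X (Sum.inr j) ⁻¹' Iic t) = gaussianReal μ 1 (Iic t) := by
      intro j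
      rw [← hsignal j, Measure.map_apply (hmeas _) measurableSet_Iic]
    rw [Finset.prod_congr rfl (fun j _ => this j), Finset.prod_const, Finset.card_univ,
      Fintype.card_fin]
  have hB : P (⋃ i, X (Sum.inl i) ⁻¹' Ioi t) ≤ n₀ * ENNReal.ofReal (Real.exp (-(t^2)/2)) := by
    refine le_trans (measure_iUnion_le _) ?_
    rw [tsum_fintype]
    have hone : ∀ i : Fin n₀, P (X (Sum.inl i) ⁻¹' Ioi t)
        ≤ ENNReal.ofReal (Real.exp (-(t^2)/2)) := by
      intro i
      rw [← Measure.map_apply (hmeas _) measurableSet_Ioi, hnoise i]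
      exact le_trans (measure_mono Ioi_subset_Ici_self) (gauss_tail_upper ht)
    refine le_trans (Finset.sum_le_sum (fun i _ => hone i)) ?_
    rw [Finset.sum_const, Finset.card_univ, Fintype.card_fin, nsmul_eq_mul]
  rw [hA]
  exact add_le_add le_rfl hB

lemma my_sqrt_atTop : Tendsto Real.sqrt atTop atTop := by
  rw [tendsto_atTop]
  intro b
  filter_upwards [eventually_ge_atTop (max (b^2) 0)] with x hx
  calc b ≤ |b| := le_abs_self b
    _ = Real.sqrt (b^2) := (Real.sqrt_sq_eq_abs b).symm
    _ ≤ Real.sqrt x := Real.sqrt_le_sqrt (le_trans (le_max_left _ _) hx)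

lemma log_nat_nonneg (n : ℕ) : 0 ≤ Real.log n := by
  rcases Nat.eq_zero_or_pos n with h | h
  · simp [h]
  · exact Real.log_nonneg (by exact_mod_cast h)

lemma limA {ε : ℝ} (hε : 0 < ε) {n₀ : ℕ → ℕ} (hn₀ : Tendsto n₀ atTop atTop) :
    Tendsto (fun k => (n₀ k : ℝ) *
      Real.exp (-(Real.sqrt (2*(1+ε/2)*Real.log (n₀ k)))^2/2)) atTop (nhds 0) := by
  have hlim : Tendsto (fun k => ((n₀ k : ℝ)) ^ (-(ε/2))) atTop (nhds 0) :=
    (tendsto_rpow_neg_atTop (by linarith)).comp (tendsto_natCast_atTop_atTop.comp hn₀)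
  refine Tendsto.congr' ?_ hlim
  filter_upwards [hn₀.eventually_ge_atTop 1] with k hk
  have hpos : (0:ℝ) < n₀ k := by exact_mod_cast hk
  have hlog : 0 ≤ Real.log (n₀ k) := log_nat_nonneg _
  rw [Real.rpow_def_of_pos hpos, Real.sq_sqrt (by nlinarith),
    show Real.log ((n₀ k : ℝ)) * (-(ε/2))
      = Real.log ((n₀ k : ℝ)) + (-(2*(1+ε/2)*Real.log ((n₀ k : ℝ)))/2) by ring,
    Real.exp_add, Real.exp_log hpos]

lemma limB {ε : ℝ} (hε : 0 < ε) {n₀ n₁ : ℕ → ℕ}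
    (hn₀ : Tendsto n₀ atTop atTop) (hn₁ : Tendsto n₁ atTop atTop)
    {μ : ℕ → ℝ}
    (hμ : ∀ k, Real.sqrt (2 * (1 + ε) * Real.log (n₀ k))
        - Real.sqrt (2 * Real.log (n₁ k)) ≤ μ k) :
    Tendsto (fun k => (n₁ k : ℝ) *
      (Real.exp (-((max (Real.sqrt (2*(1+ε/2)*Real.log (n₀ k)) - μ k) 0 + 1)^2)/2)
        * (Real.sqrt (2*π))⁻¹)) atTop atTop := by
  set t : ℕ → ℝ := fun k => Real.sqrt (2*(1+ε/2)*Real.log (n₀ k)) with htdef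
  set L : ℕ → ℝ := fun k => Real.sqrt (2*Real.log (n₁ k)) with hLdef
  set c : ℕ → ℝ := fun k => Real.sqrt (2*(1+ε)*Real.log (n₀ k)) - t k with hcdef
  set d : ℝ := Real.sqrt (1+ε) - Real.sqrt (1+ε/2) with hddef
  have hd : 0 < d := by
    rw [hddef, sub_pos]
    exact Real.sqrt_lt_sqrt (by linarith) (by linarith)
  have hcform : ∀ k, c k = d * Real.sqrt (2*Real.log (n₀ k)) := by
    intro k
    have e1 : Real.sqrt (2*(1+ε)*Real.log (n₀ k))
        = Real.sqrt (1+ε) * Real.sqrt (2*Real.log (n₀ k)) := by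
      rw [show 2*(1+ε)*Real.log (n₀ k) = (1+ε)*(2*Real.log (n₀ k)) by ring,
        Real.sqrt_mul (by linarith)]
    have e2 : Real.sqrt (2*(1+ε/2)*Real.log (n₀ k))
        = Real.sqrt (1+ε/2) * Real.sqrt (2*Real.log (n₀ k)) := by
      rw [show 2*(1+ε/2)*Real.log (n₀ k) = (1+ε/2)*(2*Real.log (n₀ k)) by ring,
        Real.sqrt_mul (by linarith)]
    simp only [hcdef, htdef, hddef]
    rw [e1, e2]
    ring
  have hL : Tendsto L atTop atTop := by
    apply my_sqrt_atTop.comp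
    apply Tendsto.const_mul_atTop two_pos
    exact Real.tendsto_log_atTop.comp (tendsto_natCast_atTop_atTop.comp hn₁)
  have hc : Tendsto c atTop atTop := by
    have : Tendsto (fun k => d * Real.sqrt (2*Real.log (n₀ k))) atTop atTop := by
      apply Tendsto.const_mul_atTop hd
      apply my_sqrt_atTop.comp
      apply Tendsto.const_mul_atTop two_pos
      exact Real.tendsto_log_atTop.comp (tendsto_natCast_atTop_atTop.comp hn₀)
    exact this.congr (fun k => (hcform k).symm)
  set h : ℕ → ℝ := fun k => min ((L k)^2 - 1) ((c k - 1) * (L k + 1)) with hhdef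
  have hh : Tendsto h atTop atTop := by
    rw [tendsto_atTop]
    intro b
    have h1 : ∀ᶠ k in atTop, b ≤ (L k)^2 - 1 := by
      have : Tendsto (fun k => (L k)^2 - 1) atTop atTop :=
        tendsto_atTop_add_const_right _ _ (by
          simpa [sq] using hL.atTop_mul_atTop₀ hL)
      exact this.eventually_ge_atTop b
    have h2 : ∀ᶠ k in atTop, b ≤ (c k - 1) * (L k + 1) := by
      have : Tendsto (fun k => (c k - 1) * (L k + 1)) atTop atTop :=
        (tendsto_atTop_add_const_right _ _ hc).atTop_mul_atTop₀
          (tendsto_atTop_add_const_right _ _ hL)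
      exact this.eventually_ge_atTop b
    filter_upwards [h1, h2] with k h1 h2
    exact le_min h1 h2
  have hexp : Tendsto (fun k => Real.exp (h k / 2) * (Real.sqrt (2*π))⁻¹) atTop atTop := by
    apply Tendsto.atTop_mul_const (by positivity)
    exact Real.tendsto_exp_atTop.comp (hh.atTop_div_const two_pos)
  apply tendsto_atTop_mono' atTop _ hexp
  filter_upwards [hn₁.eventually_ge_atTop 1, hc.eventually_ge_atTop 1] with k hk1 hck
  -- key pointwise inequality
  have hL0 : 0 ≤ L k := Real.sqrt_nonneg _
  have hlog₁ : 0 ≤ Real.log (n₁ k) := log_nat_nonneg _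
  have hn₁pos : (0:ℝ) < n₁ k := by exact_mod_cast hk1
  have hLsq : (L k)^2 = 2 * Real.log (n₁ k) := Real.sq_sqrt (by linarith)
  have hn₁eq : (n₁ k : ℝ) = Real.exp ((L k)^2 / 2) := by
    rw [hLsq]
    rw [show 2 * Real.log (n₁ k) / 2 = Real.log (n₁ k) by ring, Real.exp_log hn₁pos]
  set s : ℝ := max (t k - μ k) 0 with hsdef
  set m : ℝ := max (L k - c k) 0 with hmdef
  have hsm : s ≤ m := by
    apply max_le_max _ le_rfl
    have h1 := hμ k
    simp only [hcdef, htdef, hLdef]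
    linarith
  have hs0 : 0 ≤ s := le_max_right _ _
  have hm0 : 0 ≤ m := le_max_right _ _
  have hsq : (s + 1)^2 ≤ (m + 1)^2 := by nlinarith
  have hkey : (L k)^2 - (m + 1)^2 ≥ h k := by
    rcases le_or_gt (L k - c k) 0 with hlc | hlc
    · have : m = 0 := max_eq_right hlc
      rw [this]
      calc h k ≤ (L k)^2 - 1 := min_le_left _ _
        _ = (L k)^2 - (0+1)^2 := by ring
    · have hm : m = L k - c k := max_eq_left hlc.le
      have hcL : c k ≤ L k := by linarith
      calc h k ≤ (c k - 1) * (L k + 1) := min_le_right _ _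
        _ ≤ (L k)^2 - (m + 1)^2 := by rw [hm]; nlinarith
  calc Real.exp (h k / 2) * (Real.sqrt (2*π))⁻¹
      ≤ Real.exp (((L k)^2 - (m+1)^2) / 2) * (Real.sqrt (2*π))⁻¹ := by
        apply mul_le_mul_of_nonneg_right _ (by positivity)
        exact Real.exp_le_exp.2 (by linarith)
    _ ≤ Real.exp (((L k)^2 - (s+1)^2) / 2) * (Real.sqrt (2*π))⁻¹ := by
        apply mul_le_mul_of_nonneg_right _ (by positivity)
        exact Real.exp_le_exp.2 (by linarith)
    _ = (n₁ k : ℝ) * (Real.exp (-((s+1)^2)/2) * (Real.sqrt (2*π))⁻¹) := by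
        rw [hn₁eq, ← mul_assoc, ← Real.exp_add]
        congr 2
        ring

/-- Two-group normal model: if `μ ≥ sqrt (2(1+ε) log |S₀|) - sqrt (2 log |S₁|)` for some
fixed `ε > 0`, then `P(max_{i ∈ S₁} X_i ≤ max_{i ∈ S₀} X_i) → 0` as `|S₀|, |S₁| → ∞`,
i.e. the signal subset exists with probability tending to one. -/
theorem signal_subset_exists
    {Ω : ℕ → Type*} [∀ k, MeasurableSpace (Ω k)]
    (P : ∀ k, Measure (Ω k)) [∀ k, IsProbabilityMeasure (P k)]
    (n₀ n₁ : ℕ → ℕ) (hn₀ : Tendsto n₀ atTop atTop) (hn₁ : Tendsto n₁ atTop atTop)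
    (μ : ℕ → ℝ) (ε : ℝ) (hε : 0 < ε)
    (X : ∀ k, (Fin (n₀ k) ⊕ Fin (n₁ k)) → Ω k → ℝ)
    (hmeas : ∀ k i, Measurable (X k i))
    (hindep : ∀ k, iIndepFun (X k) (P k))
    (hnoise : ∀ k i, Measure.map (X k (Sum.inl i)) (P k) = gaussianReal 0 1)
    (hsignal : ∀ k j, Measure.map (X k (Sum.inr j)) (P k) = gaussianReal (μ k) 1)
    (hμ : ∀ k, Real.sqrt (2 * (1 + ε) * Real.log (n₀ k))
        - Real.sqrt (2 * Real.log (n₁ k)) ≤ μ k) :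
    Tendsto
      (fun k => P k {ω | (⨆ j, X k (Sum.inr j) ω) ≤ ⨆ i, X k (Sum.inl i) ω})
      atTop (nhds 0) := by
  set t : ℕ → ℝ := fun k => Real.sqrt (2*(1+ε/2)*Real.log (n₀ k)) with htdef
  set F : ℕ → ℝ := fun k =>
    Real.exp (-((n₁ k : ℝ) *
      (Real.exp (-((max (t k - μ k) 0 + 1)^2)/2) * (Real.sqrt (2*Real.pi))⁻¹)))
    + (n₀ k : ℝ) * Real.exp (-(t k)^2/2) with hFdef
  have hF : Tendsto F atTop (nhds 0) := by
    have h1 := limB hε hn₀ hn₁ hμ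
    have h2 : Tendsto (fun k => Real.exp (-((n₁ k : ℝ) *
        (Real.exp (-((max (t k - μ k) 0 + 1)^2)/2) * (Real.sqrt (2*Real.pi))⁻¹))))
        atTop (nhds 0) :=
      Real.tendsto_exp_atBot.comp (tendsto_neg_atTop_atBot.comp h1)
    have h3 := limA hε hn₀
    have h4 := h2.add h3
    rw [add_zero] at h4
    exact h4
  have hF' : Tendsto (fun k => ENNReal.ofReal (F k)) atTop (nhds 0) := by
    have := (ENNReal.continuous_ofReal.tendsto 0).comp hF
    simpa [Function.comp_def] using this
  apply tendsto_of_tendsto_of_tendsto_of_le_of_le' tendsto_const_nhds hF'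
  · exact Eventually.of_forall (fun k => zero_le)
  · filter_upwards [hn₀.eventually_ge_atTop 1, hn₁.eventually_ge_atTop 1] with k hk0 hk1
    have hb := key_bound (P k) hk0 hk1 (μ k) (X k) (hmeas k) (hindep k) (hnoise k)
      (hsignal k) (t k) (Real.sqrt_nonneg _)
    refine le_trans hb ?_
    have hs := signal_term_bound (μ k) (t k) (n₁ k)
    have hn : ((n₀ k : ℝ≥0∞)) * ENNReal.ofReal (Real.exp (-(t k)^2/2))
        = ENNReal.ofReal ((n₀ k : ℝ) * Real.exp (-(t k)^2/2)) := by
      rw [ENNReal.ofReal_mul (by positivity), ENNReal.ofReal_natCast]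
    rw [hn]
    refine le_trans (add_le_add hs le_rfl) ?_
    rw [← ENNReal.ofReal_add (by positivity) (by positivity)]
end

section
/- Under the two-group normal model with independent observations, if μ ≤ sqrt(2(1-ε) log |S_0|) - sqrt(2 log |S_1|) for some fixed ε > 0, then P(max_{i∈S_1} X_i > max_{i∈S_0} X_i) → 0 as |S_0|, |S_1| → ∞; that is, with probability tending to 1 no signal observation exceeds all noise observations. -/
open MeasureTheory ProbabilityTheory Filter Set

namespace SignalProofAux

open Real

lemma gauss_anti (t : ℝ) : ∫ x in Set.Ioi t, x * Real.exp (-x^2/2) = Real.exp (-t^2/2) := by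
  have hint : IntegrableOn (fun x : ℝ => x * Real.exp (-x^2/2)) (Set.Ioi t) := by
    have h := integrable_rpow_mul_exp_neg_mul_sq (b := 1/2) (by norm_num) (s := 1) (by norm_num)
    have h2 : (fun x : ℝ => x ^ (1:ℝ) * Real.exp (-(1/2) * x^2)) = fun x : ℝ => x * Real.exp (-x^2/2) := by
      funext x; rw [Real.rpow_one]; ring_nf
    rw [h2] at h
    exact h.integrableOn
  have hderiv : ∀ x ∈ Set.Ici t, HasDerivAt (fun x : ℝ => -Real.exp (-x^2/2)) (x * Real.exp (-x^2/2)) x := by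
    intro x _
    have h1 : HasDerivAt (fun x : ℝ => -x^2/2) (-x) x := by
      have h := ((hasDerivAt_pow 2 x).div_const 2).neg
      exact (h.congr_of_eventuallyEq (Filter.Eventually.of_forall fun y => by
        simp only [Pi.neg_apply]; ring)).congr_deriv (by
        rw [show (2:ℕ) - 1 = 1 from rfl]; push_cast; ring)
    have h2 := (h1.exp).neg
    exact (h2.congr_of_eventuallyEq (Filter.Eventually.of_forall fun y => rfl)).congr_deriv (by ring)
  have hlim : Tendsto (fun x : ℝ => -Real.exp (-x^2/2)) atTop (nhds 0) := by
    have h0 : Tendsto (fun x : ℝ => -x^2/2) atTop atBot := by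
      have h := (tendsto_pow_atTop (two_ne_zero)).atTop_div_const (by norm_num : (0:ℝ) < 2)
      have := tendsto_neg_atTop_atBot.comp h
      simpa [Function.comp_def, neg_div] using this
    have := (Real.tendsto_exp_atBot.comp h0).neg
    simpa using this
  have hh := integral_Ioi_of_hasDerivAt_of_tendsto' hderiv hint hlim
  rw [hh]; ring

lemma pdf01 (x : ℝ) : gaussianPDFReal 0 1 x = (Real.sqrt (2*π))⁻¹ * Real.exp (-x^2/2) := by
  simp [gaussianPDFReal]

lemma sqrt2pi_ge_one : 1 ≤ Real.sqrt (2*π) := by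
  rw [show (1:ℝ) = Real.sqrt 1 by simp]
  apply Real.sqrt_le_sqrt
  nlinarith [Real.pi_gt_three]

lemma pdf01_le (x : ℝ) : gaussianPDFReal 0 1 x ≤ Real.exp (-x^2/2) := by
  rw [pdf01]
  have h1 := sqrt2pi_ge_one
  have h2 : (Real.sqrt (2*π))⁻¹ ≤ 1 := by
    rw [inv_le_one_iff₀]; right; exact h1
  nlinarith [Real.exp_pos (-x^2/2), Real.sqrt_nonneg (2*π)]

lemma gauss_tail_upper {t : ℝ} (ht : 0 < t) :
    (gaussianReal 0 1) (Set.Ici t) ≤ ENNReal.ofReal (Real.exp (-t^2/2) / t) := by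
  rw [gaussianReal_apply_eq_integral 0 one_ne_zero]
  apply ENNReal.ofReal_le_ofReal
  rw [MeasureTheory.integral_Ici_eq_integral_Ioi]
  have hint1 : IntegrableOn (gaussianPDFReal 0 1) (Set.Ioi t) :=
    (integrable_gaussianPDFReal 0 1).integrableOn
  have hint2 : IntegrableOn (fun x : ℝ => t⁻¹ * (x * Real.exp (-x^2/2))) (Set.Ioi t) := by
    apply Integrable.const_mul
    have h := integrable_rpow_mul_exp_neg_mul_sq (b := 1/2) (by norm_num) (s := 1) (by norm_num)
    have h2 : (fun x : ℝ => x ^ (1:ℝ) * Real.exp (-(1/2) * x^2)) = fun x : ℝ => x * Real.exp (-x^2/2) := by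
      funext x; rw [Real.rpow_one]; ring_nf
    rw [h2] at h
    exact h.integrableOn
  calc ∫ x in Set.Ioi t, gaussianPDFReal 0 1 x
      ≤ ∫ x in Set.Ioi t, t⁻¹ * (x * Real.exp (-x^2/2)) := by
        apply setIntegral_mono_on hint1 hint2 measurableSet_Ioi
        intro x hx
        have hx' : t < x := hx
        have h1 : (1:ℝ) ≤ t⁻¹ * x := by
          rw [inv_mul_eq_div, le_div_iff₀ ht]; linarith
        calc gaussianPDFReal 0 1 x ≤ Real.exp (-x^2/2) := pdf01_le x
          _ = 1 * Real.exp (-x^2/2) := by ring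
          _ ≤ (t⁻¹ * x) * Real.exp (-x^2/2) := by
              apply mul_le_mul_of_nonneg_right h1 (Real.exp_pos _).le
          _ = t⁻¹ * (x * Real.exp (-x^2/2)) := by ring
    _ = t⁻¹ * ∫ x in Set.Ioi t, x * Real.exp (-x^2/2) := by
        rw [MeasureTheory.integral_const_mul]
    _ = Real.exp (-t^2/2) / t := by rw [gauss_anti]; ring

lemma gauss_tail_lower {t : ℝ} (ht : 0 ≤ t) :
    Real.exp (-(t+1)^2/2) / Real.sqrt (2*π) ≤ ((gaussianReal 0 1) (Set.Ici t)).toReal := by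
  rw [gaussianReal_apply_eq_integral 0 one_ne_zero, ENNReal.toReal_ofReal
    (setIntegral_nonneg measurableSet_Ici (fun x _ => gaussianPDFReal_nonneg 0 1 x))]
  have hsub : Set.Ioc t (t+1) ⊆ Set.Ici t := fun x hx => le_of_lt hx.1
  have hint : IntegrableOn (gaussianPDFReal 0 1) (Set.Ici t) :=
    (integrable_gaussianPDFReal 0 1).integrableOn
  calc Real.exp (-(t+1)^2/2) / Real.sqrt (2*π)
      = ∫ _x in Set.Ioc t (t+1), (Real.sqrt (2*π))⁻¹ * Real.exp (-(t+1)^2/2) := by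
        rw [setIntegral_const, Real.volume_real_Ioc]
        rw [show t + 1 - t = 1 by ring, max_eq_left zero_le_one, one_smul]
        ring
    _ ≤ ∫ x in Set.Ioc t (t+1), gaussianPDFReal 0 1 x := by
        apply setIntegral_mono_on (integrableOn_const measure_Ioc_lt_top.ne)
          (hint.mono hsub le_rfl) measurableSet_Ioc
        intro x hx
        rw [pdf01]
        have hxx : x^2 ≤ (t+1)^2 := by nlinarith [hx.1, hx.2]
        have : Real.exp (-(t+1)^2/2) ≤ Real.exp (-x^2/2) := by
          apply Real.exp_le_exp.2; linarith
        have h0 : (0:ℝ) < (Real.sqrt (2*π))⁻¹ := by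
          apply inv_pos.2; linarith [sqrt2pi_ge_one]
        nlinarith
    _ ≤ ∫ x in Set.Ici t, gaussianPDFReal 0 1 x := by
        apply setIntegral_mono_set hint
        · exact Filter.Eventually.of_forall (fun x => gaussianPDFReal_nonneg 0 1 x)
        · exact Filter.Eventually.of_forall hsub

lemma gauss_shift (m t : ℝ) : (gaussianReal m 1) (Set.Ici t) = (gaussianReal 0 1) (Set.Ici (t - m)) := by
  have h : Measure.map (· + m) (gaussianReal 0 1) = gaussianReal m 1 := by
    rw [gaussianReal_map_add_const]; simp
  rw [← h, Measure.map_apply (measurable_add_const m) measurableSet_Ici]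
  congr 1
  ext x
  simp [Set.mem_preimage, le_sub_iff_add_le]

lemma sqrt_tendsto_atTop : Tendsto Real.sqrt atTop atTop := by
  rw [tendsto_atTop_atTop]
  intro C
  exact ⟨C^2, fun x hx => by
    calc C ≤ |C| := le_abs_self C
    _ = Real.sqrt (C^2) := (Real.sqrt_sq_eq_abs C).symm
    _ ≤ Real.sqrt x := Real.sqrt_le_sqrt hx⟩

lemma eps_lin_sub_sqrt {e : ℝ} (he : 0 < e) :
    Tendsto (fun L : ℝ => e * L - Real.sqrt (2 * L)) atTop atTop := by
  apply tendsto_atTop_mono' atTop (show ∀ᶠ L in atTop, e * L / 2 ≤ e * L - Real.sqrt (2*L) from ?_)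
  · exact (tendsto_id.const_mul_atTop he).atTop_div_const (by norm_num)
  · filter_upwards [Filter.eventually_ge_atTop (max 0 (8 / e^2))] with L hL
    have hL0 : 0 ≤ L := le_trans (le_max_left _ _) hL
    have hL8 : 8 / e^2 ≤ L := le_trans (le_max_right _ _) hL
    have h8 : 8 ≤ e^2 * L := by
      rw [div_le_iff₀ (by positivity)] at hL8; linarith [hL8]
    have hs : Real.sqrt (2*L) ≤ e * L / 2 := by
      rw [show e * L / 2 = Real.sqrt ((e*L/2)^2) from (Real.sqrt_sq (by positivity)).symm]
      apply Real.sqrt_le_sqrt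
      nlinarith
    linarith

lemma key_estimate {Ωk : Type*} [MeasurableSpace Ωk] (Pk : Measure Ωk) [IsProbabilityMeasure Pk]
    (N M : ℕ) (hN : 3 ≤ N) (hM : 3 ≤ M) (m ε' : ℝ)
    (X : (Fin N ⊕ Fin M) → Ωk → ℝ) (hmeas : ∀ i, Measurable (X i))
    (hindep : iIndepFun X Pk)
    (hnoise : ∀ i, Measure.map (X (Sum.inl i)) Pk = gaussianReal 0 1)
    (hsignal : ∀ j, Measure.map (X (Sum.inr j)) Pk = gaussianReal m 1)
    (hm : m ≤ Real.sqrt (2 * (1 - ε') * Real.log N) - Real.sqrt (2 * Real.log M)) :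
    Pk {ω | (⨆ i, X (Sum.inl i) ω) < ⨆ j, X (Sum.inr j) ω}
      ≤ ENNReal.ofReal (Real.exp (-((N:ℝ) *
          (Real.exp (-(Real.sqrt (2*(1-ε')*Real.log N) + 1)^2/2) / Real.sqrt (2*π))))
        + 1 / Real.sqrt (2*Real.log M)) := by
  haveI : Nonempty (Fin N) := ⟨⟨0, by omega⟩⟩
  haveI : Nonempty (Fin M) := ⟨⟨0, by omega⟩⟩
  have hNR : (1:ℝ) < N := by exact_mod_cast by omega
  have hMR : (1:ℝ) < M := by exact_mod_cast by omega
  have hlogN : 0 < Real.log N := Real.log_pos hNR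
  have hlogM : 0 < Real.log M := Real.log_pos hMR
  set A := Real.sqrt (2*(1-ε')*Real.log N) with hA
  set B := Real.sqrt (2*Real.log M) with hB
  have hA0 : 0 ≤ A := Real.sqrt_nonneg _
  have hB0 : 0 < B := Real.sqrt_pos.2 (by positivity)
  have hAm : B ≤ A - m := by linarith
  set c := Real.exp (-(A+1)^2/2) / Real.sqrt (2*π) with hc
  have hc0 : 0 < c := by positivity
  -- inclusion
  have hsub : {ω | (⨆ i, X (Sum.inl i) ω) < ⨆ j, X (Sum.inr j) ω}
      ⊆ (⋂ i, X (Sum.inl i) ⁻¹' Set.Iio A) ∪ (⋃ j, X (Sum.inr j) ⁻¹' Set.Ici A) := by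
    intro ω hω
    simp only [Set.mem_setOf_eq] at hω
    by_cases h : ∃ j, A ≤ X (Sum.inr j) ω
    · right
      obtain ⟨j, hj⟩ := h
      exact Set.mem_iUnion.2 ⟨j, hj⟩
    · left
      push_neg at h
      have hsup : (⨆ j, X (Sum.inr j) ω) ≤ A := ciSup_le (fun j => (h j).le)
      refine Set.mem_iInter.2 (fun i => ?_)
      have hle : X (Sum.inl i) ω ≤ ⨆ i, X (Sum.inl i) ω :=
        le_ciSup (f := fun i => X (Sum.inl i) ω) (Set.Finite.bddAbove (Set.finite_range _)) i
      exact lt_of_le_of_lt hle (lt_of_lt_of_le hω hsup)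
  -- union bound for signals
  have hT2 : Pk (⋃ j, X (Sum.inr j) ⁻¹' Set.Ici A) ≤ ENNReal.ofReal (1 / B) := by
    calc Pk (⋃ j, X (Sum.inr j) ⁻¹' Set.Ici A)
        ≤ ∑ j, Pk (X (Sum.inr j) ⁻¹' Set.Ici A) := measure_iUnion_fintype_le _ _
      _ = ∑ _j : Fin M, (gaussianReal m 1) (Set.Ici A) := Finset.sum_congr rfl (fun j _ => by
            rw [← hsignal j, Measure.map_apply (hmeas _) measurableSet_Ici])
      _ = M * (gaussianReal m 1) (Set.Ici A) := by
          rw [Finset.sum_const, Finset.card_univ, Fintype.card_fin, nsmul_eq_mul]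
      _ ≤ M * ENNReal.ofReal (Real.exp (-B^2/2) / B) := by
          apply mul_le_mul_right
          calc (gaussianReal m 1) (Set.Ici A) = (gaussianReal 0 1) (Set.Ici (A - m)) :=
                gauss_shift m A
            _ ≤ (gaussianReal 0 1) (Set.Ici B) := measure_mono (Set.Ici_subset_Ici.2 hAm)
            _ ≤ ENNReal.ofReal (Real.exp (-B^2/2) / B) := gauss_tail_upper hB0
      _ = ENNReal.ofReal (M * (Real.exp (-B^2/2) / B)) := by
          rw [← ENNReal.ofReal_natCast M, ← ENNReal.ofReal_mul (by positivity)]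
      _ = ENNReal.ofReal (1 / B) := by
          congr 1
          have hB2 : B^2 = 2 * Real.log M := Real.sq_sqrt (by positivity)
          rw [hB2, show -(2*Real.log (M:ℝ))/2 = -Real.log M by ring, Real.exp_neg,
            Real.exp_log (by positivity : (0:ℝ) < M)]
          field_simp
  -- independence bound for noise
  set r := (gaussianReal 0 1) (Set.Ici A) with hr
  have hT1 : Pk (⋂ i, X (Sum.inl i) ⁻¹' Set.Iio A) ≤ ENNReal.ofReal (Real.exp (-((N:ℝ) * c))) := by
    set S : Finset (Fin N ⊕ Fin M) :=
      (Finset.univ : Finset (Fin N)).map ⟨Sum.inl, Sum.inl_injective⟩ with hS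
    have hprod := hindep.measure_inter_preimage_eq_mul (S := S)
      (sets := fun _ => Set.Iio A) (fun i _ => measurableSet_Iio)
    have hset : (⋂ i, X (Sum.inl i) ⁻¹' Set.Iio A) = ⋂ i ∈ S, X i ⁻¹' Set.Iio A := by
      ext ω
      simp [hS, Finset.mem_map]
    have hq : ∀ i : Fin N, Pk (X (Sum.inl i) ⁻¹' Set.Iio A) = (gaussianReal 0 1) (Set.Iio A) :=
      fun i => by rw [← hnoise i, Measure.map_apply (hmeas _) measurableSet_Iio]
    have hPT1 : Pk (⋂ i, X (Sum.inl i) ⁻¹' Set.Iio A) = (gaussianReal 0 1) (Set.Iio A) ^ N := by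
      rw [hset, hprod, hS, Finset.prod_map]
      simp only [Function.Embedding.coeFn_mk]
      rw [Finset.prod_congr rfl (fun i _ => hq i), Finset.prod_const, Finset.card_univ,
        Fintype.card_fin]
    have hq1 : (gaussianReal 0 1) (Set.Iio A) = 1 - r := by
      rw [← Set.compl_Ici, measure_compl measurableSet_Ici (measure_ne_top _ _), measure_univ]
    have hrle : r ≤ 1 := prob_le_one
    have hrt1 : r.toReal ≤ 1 := by
      simpa using ENNReal.toReal_mono ENNReal.one_ne_top hrle
    have hrt0 : 0 ≤ r.toReal := ENNReal.toReal_nonneg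
    have hct : c ≤ r.toReal := gauss_tail_lower hA0
    have hqto : ((gaussianReal 0 1) (Set.Iio A)).toReal = 1 - r.toReal := by
      rw [hq1, ENNReal.toReal_sub_of_le hrle ENNReal.one_ne_top, ENNReal.toReal_one]
    rw [hPT1, ← ENNReal.ofReal_toReal (a := (gaussianReal 0 1) (Set.Iio A)) (measure_ne_top _ _),
      ← ENNReal.ofReal_pow ENNReal.toReal_nonneg]
    apply ENNReal.ofReal_le_ofReal
    calc ((gaussianReal 0 1) (Set.Iio A)).toReal ^ N = (1 - r.toReal) ^ N := by rw [hqto]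
      _ ≤ Real.exp (-r.toReal) ^ N := by
          apply pow_le_pow_left₀ (by linarith)
          linarith [Real.add_one_le_exp (-r.toReal)]
      _ = Real.exp (-((N:ℝ) * r.toReal)) := by
          rw [← Real.exp_nat_mul]; ring_nf
      _ ≤ Real.exp (-((N:ℝ) * c)) := by
          apply Real.exp_le_exp.2
          have : (0:ℝ) ≤ N := Nat.cast_nonneg N
          nlinarith
  calc Pk {ω | (⨆ i, X (Sum.inl i) ω) < ⨆ j, X (Sum.inr j) ω}
      ≤ Pk ((⋂ i, X (Sum.inl i) ⁻¹' Set.Iio A) ∪ (⋃ j, X (Sum.inr j) ⁻¹' Set.Ici A)) :=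
        measure_mono hsub
    _ ≤ Pk (⋂ i, X (Sum.inl i) ⁻¹' Set.Iio A) + Pk (⋃ j, X (Sum.inr j) ⁻¹' Set.Ici A) :=
        measure_union_le _ _
    _ ≤ ENNReal.ofReal (Real.exp (-((N:ℝ) * c))) + ENNReal.ofReal (1 / B) := add_le_add hT1 hT2
    _ = ENNReal.ofReal (Real.exp (-((N:ℝ) * c)) + 1 / B) := by
        rw [← ENNReal.ofReal_add (by positivity) (by positivity)]

lemma bound_tendsto_zero (n₀ n₁ : ℕ → ℕ) (hn₀ : Tendsto n₀ atTop atTop)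
    (hn₁ : Tendsto n₁ atTop atTop) (ε' : ℝ) (hε'pos : 0 < ε') (hε'le : ε' ≤ 1/2) :
    Tendsto (fun k => Real.exp (-((n₀ k : ℝ) *
      (Real.exp (-(Real.sqrt (2 * (1 - ε') * Real.log (n₀ k)) + 1)^2/2) / Real.sqrt (2*π))))
      + 1 / Real.sqrt (2 * Real.log (n₁ k))) atTop (nhds 0) := by
  have hlogN : Tendsto (fun k => Real.log (n₀ k)) atTop atTop :=
    Real.tendsto_log_atTop.comp (tendsto_natCast_atTop_atTop.comp hn₀)
  have hlogM : Tendsto (fun k => Real.log (n₁ k)) atTop atTop :=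
    Real.tendsto_log_atTop.comp (tendsto_natCast_atTop_atTop.comp hn₁)
  have hsqrt2pi : (0:ℝ) < Real.sqrt (2*π) := Real.sqrt_pos.2 (by positivity)
  have term2 : Tendsto (fun k => 1 / Real.sqrt (2 * Real.log (n₁ k))) atTop (nhds 0) := by
    simp only [one_div]
    exact tendsto_inv_atTop_zero.comp (sqrt_tendsto_atTop.comp (hlogM.const_mul_atTop two_pos))
  have hNc : Tendsto (fun k => (n₀ k : ℝ) *
      (Real.exp (-(Real.sqrt (2 * (1 - ε') * Real.log (n₀ k)) + 1)^2/2) / Real.sqrt (2*π)))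
      atTop atTop := by
    have hg : Tendsto (fun L : ℝ => Real.exp (ε' * L - Real.sqrt (2*L) - 1/2) / Real.sqrt (2*π))
        atTop atTop := by
      apply Tendsto.atTop_div_const hsqrt2pi
      apply Real.tendsto_exp_atTop.comp
      exact tendsto_atTop_add_const_right _ (-(1/2) : ℝ) (eps_lin_sub_sqrt hε'pos) |>.congr
        (fun L => by ring_nf)
    apply tendsto_atTop_mono' atTop ?_ (hg.comp hlogN)
    filter_upwards [hn₀.eventually_ge_atTop 1] with k hk
    set L := Real.log (n₀ k) with hL
    have hL0 : 0 ≤ L := Real.log_natCast_nonneg _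
    have hNpos : (0:ℝ) < n₀ k := by exact_mod_cast hk
    have hNL : (n₀ k : ℝ) = Real.exp L := (Real.exp_log hNpos).symm
    set A := Real.sqrt (2 * (1 - ε') * L) with hA
    have hA0 : 0 ≤ A := Real.sqrt_nonneg _
    have hA2 : A^2 = 2 * (1 - ε') * L := Real.sq_sqrt (by nlinarith)
    have hAle : A ≤ Real.sqrt (2 * L) := Real.sqrt_le_sqrt (by nlinarith)
    have harg : ε' * L - Real.sqrt (2*L) - 1/2 ≤ L - (A+1)^2/2 := by nlinarith
    calc Real.exp (ε' * L - Real.sqrt (2*L) - 1/2) / Real.sqrt (2*π)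
        ≤ Real.exp (L - (A+1)^2/2) / Real.sqrt (2*π) := by gcongr
      _ = (n₀ k : ℝ) * (Real.exp (-(A+1)^2/2) / Real.sqrt (2*π)) := by
          rw [hNL, mul_div_assoc', ← Real.exp_add]; ring_nf
  have term1 : Tendsto (fun k => Real.exp (-((n₀ k : ℝ) *
      (Real.exp (-(Real.sqrt (2 * (1 - ε') * Real.log (n₀ k)) + 1)^2/2) / Real.sqrt (2*π)))))
      atTop (nhds 0) :=
    Real.tendsto_exp_atBot.comp (tendsto_neg_atTop_atBot.comp hNc)
  simpa using term1.add term2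

end SignalProofAux

open SignalProofAux Real

/-- Two-group normal model: if `μ ≤ sqrt (2(1-ε) log |S₀|) - sqrt (2 log |S₁|)` for some
fixed `ε > 0`, then `P(max_{i ∈ S₁} X_i > max_{i ∈ S₀} X_i) → 0` as `|S₀|, |S₁| → ∞`,
i.e. with probability tending to one no signal observation exceeds all noise observations. -/
theorem signal_subset_does_not_exist
    {Ω : ℕ → Type*} [∀ k, MeasurableSpace (Ω k)]
    (P : ∀ k, Measure (Ω k)) [∀ k, IsProbabilityMeasure (P k)]
    (n₀ n₁ : ℕ → ℕ) (hn₀ : Tendsto n₀ atTop atTop) (hn₁ : Tendsto n₁ atTop atTop)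
    (μ : ℕ → ℝ) (ε : ℝ) (hε : 0 < ε)
    (X : ∀ k, (Fin (n₀ k) ⊕ Fin (n₁ k)) → Ω k → ℝ)
    (hmeas : ∀ k i, Measurable (X k i))
    (hindep : ∀ k, iIndepFun (X k) (P k))
    (hnoise : ∀ k i, Measure.map (X k (Sum.inl i)) (P k) = gaussianReal 0 1)
    (hsignal : ∀ k j, Measure.map (X k (Sum.inr j)) (P k) = gaussianReal (μ k) 1)
    (hμ : ∀ k, μ k ≤ Real.sqrt (2 * (1 - ε) * Real.log (n₀ k))
        - Real.sqrt (2 * Real.log (n₁ k))) :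
    Tendsto
      (fun k => P k {ω | (⨆ i, X k (Sum.inl i) ω) < ⨆ j, X k (Sum.inr j) ω})
      atTop (nhds 0) := by
  set ε' : ℝ := min ε (1/2) with hε'def
  have hε'pos : 0 < ε' := lt_min hε (by norm_num)
  have hε'le : ε' ≤ 1/2 := min_le_right _ _
  have key : ∀ᶠ k in atTop, P k {ω | (⨆ i, X k (Sum.inl i) ω) < ⨆ j, X k (Sum.inr j) ω}
      ≤ ENNReal.ofReal (Real.exp (-((n₀ k : ℝ) *
          (Real.exp (-(Real.sqrt (2*(1-ε')*Real.log (n₀ k)) + 1)^2/2) / Real.sqrt (2*π))))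
        + 1 / Real.sqrt (2*Real.log (n₁ k))) := by
    filter_upwards [hn₀.eventually_ge_atTop 3, hn₁.eventually_ge_atTop 3] with k hk₀ hk₁
    apply key_estimate (P k) (n₀ k) (n₁ k) hk₀ hk₁ (μ k) ε' (X k) (hmeas k) (hindep k)
      (hnoise k) (hsignal k)
    have hL0 : 0 ≤ Real.log (n₀ k) := Real.log_natCast_nonneg _
    have hmono : Real.sqrt (2 * (1 - ε) * Real.log (n₀ k))
        ≤ Real.sqrt (2 * (1 - ε') * Real.log (n₀ k)) := by
      apply Real.sqrt_le_sqrt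
      have h1 : ε' ≤ ε := min_le_left _ _
      nlinarith
    linarith [hμ k]
  have hf0 := bound_tendsto_zero n₀ n₁ hn₀ hn₁ ε' hε'pos hε'le
  have hof : Tendsto (fun k => ENNReal.ofReal (Real.exp (-((n₀ k : ℝ) *
      (Real.exp (-(Real.sqrt (2*(1-ε')*Real.log (n₀ k)) + 1)^2/2) / Real.sqrt (2*π))))
      + 1 / Real.sqrt (2*Real.log (n₁ k)))) atTop (nhds 0) := by
    rw [show (0:ENNReal) = ENNReal.ofReal 0 by simp]
    exact ENNReal.tendsto_ofReal hf0
  exact tendsto_of_tendsto_of_tendsto_of_le_of_le' tendsto_const_nhds hof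
    (Filter.Eventually.of_forall (fun k => zero_le)) key
end

section
/- Under the two-group normal model, if μ ≥ sqrt(2(1+ε) log |S_0|) + sqrt(2 log |S_1|) for some fixed ε > 0, then P(min_{i∈S_1} X_i ≤ max_{i∈S_0} X_i) → 0 as |S_0|, |S_1| → ∞; that is, with probability tending to 1 every signal observation exceeds every noise observation and the indistinguishable subset is empty. -/
open MeasureTheory ProbabilityTheory Filter Set

section AuxTailBounds
open Real
open scoped ENNReal NNReal
lemma aux_pdf_le {a : ℝ} (ha : 0 ≤ a) {x : ℝ} (hx : a ≤ x) :
    gaussianPDFReal 0 1 x ≤ Real.exp (-(a^2)/2) * gaussianPDFReal a 1 x := by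
  simp only [gaussianPDFReal]
  rw [mul_left_comm, ← Real.exp_add]
  apply mul_le_mul_of_nonneg_left _ (by positivity)
  apply Real.exp_le_exp.mpr
  push_cast
  nlinarith [sq_nonneg (x - a)]

lemma gauss_tail {a : ℝ} (ha : 0 ≤ a) :
    gaussianReal 0 1 {x | a ≤ x} ≤ ENNReal.ofReal (Real.exp (-(a^2)/2)) := by
  rw [gaussianReal_apply 0 one_ne_zero]
  calc ∫⁻ x in {x | a ≤ x}, gaussianPDF 0 1 x
      ≤ ∫⁻ x in {x | a ≤ x}, ENNReal.ofReal (Real.exp (-(a^2)/2)) *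
          ENNReal.ofReal (gaussianPDFReal a 1 x) := by
        refine setLIntegral_mono (Measurable.const_mul (ENNReal.measurable_ofReal.comp (measurable_gaussianPDFReal a 1)) _) (fun x hx => ?_)
        rw [gaussianPDF, ← ENNReal.ofReal_mul (Real.exp_pos _).le]
        exact ENNReal.ofReal_le_ofReal (aux_pdf_le ha hx)
    _ ≤ ∫⁻ x, ENNReal.ofReal (Real.exp (-(a^2)/2)) *
          ENNReal.ofReal (gaussianPDFReal a 1 x) := setLIntegral_le_lintegral _ _
    _ = ENNReal.ofReal (Real.exp (-(a^2)/2)) *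
          ∫⁻ x, ENNReal.ofReal (gaussianPDFReal a 1 x) := by
        rw [lintegral_const_mul]
        exact ENNReal.measurable_ofReal.comp (measurable_gaussianPDFReal a 1)
    _ = ENNReal.ofReal (Real.exp (-(a^2)/2)) := by
        rw [lintegral_gaussianPDFReal_eq_one a one_ne_zero, mul_one]


lemma aux_integral_exp (a : ℝ) (ha : 0 < a) :
    ∫ x in Ioi a, Real.exp (-(a * (x - a))) = a⁻¹ := by
  have h : ∀ x : ℝ, Real.exp (-(a * (x - a))) = Real.exp (a * a - a * x) := by
    intro x; congr 1; ring
  simp_rw [h]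
  have h2 : ∀ x : ℝ, Real.exp (a * a - a * x) = (fun y => Real.exp (a * a) * Real.exp (-y)) (a * x) := by
    intro x; show _ = rexp (a*a) * rexp (-(a*x)); rw [← Real.exp_add]; ring_nf
  simp_rw [h2]
  rw [MeasureTheory.integral_comp_mul_left_Ioi (fun y => Real.exp (a * a) * Real.exp (-y)) a ha,
    MeasureTheory.integral_const_mul, integral_exp_neg_Ioi, ← Real.exp_add, smul_eq_mul]
  simp

lemma aux_integrable_exp (a : ℝ) (ha : 0 < a) :
    IntegrableOn (fun x => Real.exp (-(a * (x - a)))) (Ici a) := by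
  rw [integrableOn_Ici_iff_integrableOn_Ioi]
  have h : ∀ x : ℝ, Real.exp (-(a * (x - a))) = Real.exp (a * a) * Real.exp (-a * x) := by
    intro x; rw [← Real.exp_add]; congr 1; ring
  simp_rw [h]
  exact (exp_neg_integrableOn_Ioi a ha).const_mul _

lemma aux_pdf_le' {a : ℝ} (ha : 0 < a) (x : ℝ) :
    gaussianPDFReal 0 1 x ≤ Real.exp (-(a^2)/2) * Real.exp (-(a * (x - a))) := by
  simp only [gaussianPDFReal]
  rw [← Real.exp_add]
  have h1 : (√(2 * π * (1:NNReal)))⁻¹ ≤ 1 := by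
    rw [NNReal.coe_one, mul_one]
    rw [inv_le_one_iff₀]
    right
    rw [Real.le_sqrt' one_pos]
    nlinarith [Real.pi_gt_three]
  calc (√(2 * π * (1:NNReal)))⁻¹ * rexp (-(x - 0) ^ 2 / (2 * (1:NNReal)))
      ≤ 1 * rexp (-(x - 0) ^ 2 / (2 * (1:NNReal))) := by
        apply mul_le_mul_of_nonneg_right h1 (Real.exp_pos _).le
    _ ≤ rexp (-a ^ 2 / 2 + -(a * (x - a))) := by
        rw [one_mul]
        apply Real.exp_le_exp.mpr
        push_cast
        nlinarith [sq_nonneg (x - a)]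

lemma gauss_tail_sharp {a : ℝ} (ha : 0 < a) :
    gaussianReal 0 1 {x | a ≤ x} ≤ ENNReal.ofReal (Real.exp (-(a^2)/2) / a) := by
  have hset : {x : ℝ | a ≤ x} = Ici a := rfl
  rw [gaussianReal_apply_eq_integral 0 one_ne_zero, hset]
  apply ENNReal.ofReal_le_ofReal
  calc ∫ x in Ici a, gaussianPDFReal 0 1 x
      ≤ ∫ x in Ici a, Real.exp (-(a^2)/2) * Real.exp (-(a * (x - a))) := by
        refine setIntegral_mono_on ((integrable_gaussianPDFReal 0 1).restrict)
          ((aux_integrable_exp a ha).const_mul _) measurableSet_Ici (fun x _ => aux_pdf_le' ha x)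
    _ = Real.exp (-(a^2)/2) / a := by
        rw [MeasureTheory.integral_const_mul, MeasureTheory.integral_Ici_eq_integral_Ioi,
          aux_integral_exp a ha, div_eq_mul_inv]
        ring_nf

lemma gaussianReal_map_msub (m : ℝ) :
    (gaussianReal m 1).map (fun x => m - x) = gaussianReal 0 1 := by
  have h : (fun x : ℝ => m - x) = (fun x => m + x) ∘ (fun x => (-1) * x) := by
    ext x; simp; ring
  rw [h, ← Measure.map_map (by fun_prop) (by fun_prop), gaussianReal_map_const_mul,
    gaussianReal_map_const_add]
  norm_num
end AuxTailBounds

open scoped ENNReal NNReal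

/-- Two-group normal model: if `μ ≥ sqrt (2(1+ε) log |S₀|) + sqrt (2 log |S₁|)` for some
fixed `ε > 0`, then `P(min_{i ∈ S₁} X_i ≤ max_{i ∈ S₀} X_i) → 0` as `|S₀|, |S₁| → ∞`,
i.e. with probability tending to one every signal observation exceeds every noise
observation and the indistinguishable subset is empty. -/
theorem indistinguishable_subset_empty
    {Ω : ℕ → Type*} [∀ k, MeasurableSpace (Ω k)]
    (P : ∀ k, Measure (Ω k)) [∀ k, IsProbabilityMeasure (P k)]
    (n₀ n₁ : ℕ → ℕ) (hn₀ : Tendsto n₀ atTop atTop) (hn₁ : Tendsto n₁ atTop atTop)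
    (μ : ℕ → ℝ) (ε : ℝ) (hε : 0 < ε)
    (X : ∀ k, (Fin (n₀ k) ⊕ Fin (n₁ k)) → Ω k → ℝ)
    (hmeas : ∀ k i, Measurable (X k i))
    (hindep : ∀ k, iIndepFun (X k) (P k))
    (hnoise : ∀ k i, Measure.map (X k (Sum.inl i)) (P k) = gaussianReal 0 1)
    (hsignal : ∀ k j, Measure.map (X k (Sum.inr j)) (P k) = gaussianReal (μ k) 1)
    (hμ : ∀ k, Real.sqrt (2 * (1 + ε) * Real.log (n₀ k))
        + Real.sqrt (2 * Real.log (n₁ k)) ≤ μ k) :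
    Tendsto
      (fun k => P k {ω | (⨅ j, X k (Sum.inr j) ω) ≤ ⨆ i, X k (Sum.inl i) ω})
      atTop (nhds 0) := by
  have hsqrt : Tendsto Real.sqrt atTop atTop := by
    rw [tendsto_atTop_atTop]
    intro b
    exact ⟨b ^ 2, fun x hx => by
      nlinarith [Real.sq_sqrt (le_trans (sq_nonneg b) hx), Real.sqrt_nonneg x]⟩
  have hB : Tendsto (fun k => ENNReal.ofReal ((n₀ k : ℝ) ^ (-ε)) +
      ENNReal.ofReal ((Real.sqrt (2 * Real.log (n₁ k)))⁻¹)) atTop (nhds 0) := by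
    have h1 : Tendsto (fun k => ((n₀ k : ℝ) ^ (-ε))) atTop (nhds 0) :=
      (tendsto_rpow_neg_atTop hε).comp (tendsto_natCast_atTop_atTop.comp hn₀)
    have h2 : Tendsto (fun k => (Real.sqrt (2 * Real.log (n₁ k)))⁻¹) atTop (nhds 0) := by
      apply tendsto_inv_atTop_zero.comp
      apply hsqrt.comp
      apply Tendsto.const_mul_atTop two_pos
      exact Real.tendsto_log_atTop.comp (tendsto_natCast_atTop_atTop.comp hn₁)
    have h := (ENNReal.tendsto_ofReal h1).add (ENNReal.tendsto_ofReal h2)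
    simpa using h
  refine tendsto_of_tendsto_of_tendsto_of_le_of_le' tendsto_const_nhds hB
    (Eventually.of_forall fun k => zero_le) ?_
  filter_upwards [hn₀.eventually_ge_atTop 2, hn₁.eventually_ge_atTop 2] with k hk0 hk1
  set t := Real.sqrt (2 * (1 + ε) * Real.log (n₀ k)) with ht_def
  set s := Real.sqrt (2 * Real.log (n₁ k)) with hs_def
  have hN0 : (1 : ℝ) < n₀ k := by exact_mod_cast hk0
  have hN1 : (1 : ℝ) < n₁ k := by exact_mod_cast hk1
  have hlog0 : 0 < Real.log (n₀ k) := Real.log_pos hN0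
  have hlog1 : 0 < Real.log (n₁ k) := Real.log_pos hN1
  have hs : 0 < s := Real.sqrt_pos.mpr (by positivity)
  have ht0 : 0 ≤ t := Real.sqrt_nonneg _
  have hne0 : Nonempty (Fin (n₀ k)) := Fin.pos_iff_nonempty.mp (by omega)
  have hne1 : Nonempty (Fin (n₁ k)) := Fin.pos_iff_nonempty.mp (by omega)
  -- inclusion
  have hsub : {ω | (⨅ j, X k (Sum.inr j) ω) ≤ ⨆ i, X k (Sum.inl i) ω} ⊆
      (⋃ i, {ω | t ≤ X k (Sum.inl i) ω}) ∪ ⋃ j, {ω | X k (Sum.inr j) ω ≤ t} := by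
    intro ω hω
    by_cases h : ∃ i, t ≤ X k (Sum.inl i) ω
    · obtain ⟨i, hi⟩ := h
      exact Or.inl (mem_iUnion.mpr ⟨i, hi⟩)
    · push_neg at h
      right
      have hsup : (⨆ i, X k (Sum.inl i) ω) ≤ t := ciSup_le fun i => (h i).le
      obtain ⟨j, hj⟩ := exists_eq_ciInf_of_finite (f := fun j => X k (Sum.inr j) ω)
      refine mem_iUnion.mpr ⟨j, ?_⟩
      have : (⨅ j, X k (Sum.inr j) ω) ≤ t := le_trans hω hsup
      simpa [hj] using this
  -- noise bound
  have hAi : ∀ i, P k {ω | t ≤ X k (Sum.inl i) ω} ≤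
      ENNReal.ofReal (Real.exp (-(t ^ 2) / 2)) := by
    intro i
    have hmap : P k {ω | t ≤ X k (Sum.inl i) ω} = gaussianReal 0 1 {x | t ≤ x} := by
      rw [← hnoise k i, show {x : ℝ | t ≤ x} = Ici t from rfl,
        Measure.map_apply (hmeas k _) measurableSet_Ici]
      rfl
    rw [hmap]
    exact gauss_tail ht0
  -- signal bound
  have hBj : ∀ j, P k {ω | X k (Sum.inr j) ω ≤ t} ≤
      ENNReal.ofReal (Real.exp (-(s ^ 2) / 2) / s) := by
    intro j
    have h1 : P k {ω | X k (Sum.inr j) ω ≤ t} = gaussianReal (μ k) 1 {x | x ≤ t} := by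
      rw [← hsignal k j, show {x : ℝ | x ≤ t} = Iic t from rfl,
        Measure.map_apply (hmeas k _) measurableSet_Iic]
      rfl
    have h2 : gaussianReal (μ k) 1 {x | x ≤ t} = gaussianReal 0 1 {y | μ k - t ≤ y} := by
      rw [← gaussianReal_map_msub (μ k), show {y : ℝ | μ k - t ≤ y} = Ici (μ k - t) from rfl,
        Measure.map_apply (measurable_id'.const_sub (μ k)) measurableSet_Ici]
      congr 1
      ext x
      simp only [mem_preimage, mem_Ici, mem_setOf_eq, sub_le_sub_iff_left]
    rw [h1, h2]
    calc gaussianReal 0 1 {y | μ k - t ≤ y} ≤ gaussianReal 0 1 {y | s ≤ y} := by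
          apply measure_mono
          intro y hy
          have := hμ k
          simp only [mem_setOf_eq] at hy ⊢
          linarith
      _ ≤ _ := gauss_tail_sharp hs
  -- assemble
  calc P k {ω | (⨅ j, X k (Sum.inr j) ω) ≤ ⨆ i, X k (Sum.inl i) ω}
      ≤ P k ((⋃ i, {ω | t ≤ X k (Sum.inl i) ω}) ∪ ⋃ j, {ω | X k (Sum.inr j) ω ≤ t}) :=
        measure_mono hsub
    _ ≤ P k (⋃ i, {ω | t ≤ X k (Sum.inl i) ω}) + P k (⋃ j, {ω | X k (Sum.inr j) ω ≤ t}) :=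
        measure_union_le _ _
    _ ≤ (∑' i : Fin (n₀ k), ENNReal.ofReal (Real.exp (-(t ^ 2) / 2)))
        + ∑' j : Fin (n₁ k), ENNReal.ofReal (Real.exp (-(s ^ 2) / 2) / s) := by
        gcongr
        · exact le_trans (measure_iUnion_le _) (ENNReal.tsum_le_tsum hAi)
        · exact le_trans (measure_iUnion_le _) (ENNReal.tsum_le_tsum hBj)
    _ = (n₀ k : ℝ≥0∞) * ENNReal.ofReal (Real.exp (-(t ^ 2) / 2))
        + (n₁ k : ℝ≥0∞) * ENNReal.ofReal (Real.exp (-(s ^ 2) / 2) / s) := by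
        simp [tsum_fintype, Finset.sum_const, Finset.card_univ, nsmul_eq_mul]
    _ ≤ ENNReal.ofReal ((n₀ k : ℝ) ^ (-ε)) + ENNReal.ofReal ((Real.sqrt (2 * Real.log (n₁ k)))⁻¹) := by
        gcongr
        · rw [← ENNReal.ofReal_natCast, ← ENNReal.ofReal_mul (Nat.cast_nonneg _)]
          apply ENNReal.ofReal_le_ofReal
          have htsq : t ^ 2 = 2 * (1 + ε) * Real.log (n₀ k) := Real.sq_sqrt (by positivity)
          rw [htsq]
          have hexp : Real.exp (-(2 * (1 + ε) * Real.log (n₀ k)) / 2) = (n₀ k : ℝ) ^ (-(1 + ε)) := by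
            rw [Real.rpow_def_of_pos (by positivity)]
            congr 1
            ring
          rw [hexp]
          have heq : (n₀ k : ℝ) ^ (-ε) = (n₀ k : ℝ) * (n₀ k : ℝ) ^ (-(1 + ε)) := by
            rw [show -ε = 1 + -(1 + ε) by ring, Real.rpow_add (by positivity), Real.rpow_one]
          rw [heq]
        · rw [← ENNReal.ofReal_natCast, ← ENNReal.ofReal_mul (Nat.cast_nonneg _)]
          apply ENNReal.ofReal_le_ofReal
          have hssq : s ^ 2 = 2 * Real.log (n₁ k) := Real.sq_sqrt (by positivity)
          rw [hssq]
          have hexp : Real.exp (-(2 * Real.log (n₁ k)) / 2) = (n₁ k : ℝ)⁻¹ := by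
            rw [show -(2 * Real.log (n₁ k)) / 2 = -Real.log (n₁ k) by ring,
              Real.exp_neg, Real.exp_log (by positivity)]
          rw [hexp, ← hs_def]
          rw [div_eq_mul_inv]
          have hN1' : (0 : ℝ) < n₁ k := by positivity
          rw [← mul_assoc, mul_inv_cancel₀ hN1'.ne', one_mul]
end

section
/- Suppose the estimator π̂ satisfies P((1-ε)π ≤ π̂ ≤ π) → 1 for every ε > 0, and the noise p-values (|S_0| = (1-π)n of them) are i.i.d. Uniform[0,1]. Define d̂_* = max{i : p_{(i)} < αₙ/((1-π̂)n)} with αₙ → 0. Then P(n_0(d̂_*) > 0) → 0; i.e., with probability tending to 1 all p-values ranked before d̂_* come from signals. -/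
open MeasureTheory ProbabilityTheory Filter Set
open scoped ENNReal

/-- First-level threshold of the TLT procedure: if the proportion estimator `π̂` is
consistent in the sense `P((1-ε)π ≤ π̂ ≤ π) → 1` for every `ε > 0`, the noise p-values
are i.i.d. Uniform[0,1], and `αₙ → 0`, then with probability tending to one no noise
p-value falls below the adaptive threshold `αₙ / ((1-π̂)n)`, i.e. `P(n₀(d̂_*) > 0) → 0`. -/
theorem first_level_threshold_no_false_positive
    {Ω : ℕ → Type*} [∀ n, MeasurableSpace (Ω n)]
    (μ : ∀ n, Measure (Ω n)) [∀ n, IsProbabilityMeasure (μ n)]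
    (S₁ : ∀ n : ℕ, Finset (Fin n))  -- signal indices
    (π : ℕ → ℝ) (hπdef : ∀ n, π n = ((S₁ n).card : ℝ) / n)
    (P : ∀ n : ℕ, Fin n → Ω n → ℝ)
    (hmeas : ∀ n i, Measurable (P n i))
    (hindep : ∀ n, iIndepFun (P n) (μ n))
    (hunif : ∀ n, ∀ i ∉ S₁ n,
      Measure.map (P n i) (μ n) = volume.restrict (Set.Icc (0 : ℝ) 1))
    (πhat : ∀ n : ℕ, Ω n → ℝ)
    (hπhatmeas : ∀ n, Measurable (πhat n))
    (hcons : ∀ ε > (0 : ℝ),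
      Tendsto (fun n => μ n {ω | (1 - ε) * π n ≤ πhat n ω ∧ πhat n ω ≤ π n})
        atTop (nhds 1))
    (α : ℕ → ℝ) (hαpos : ∀ n, 0 < α n) (hα0 : Tendsto α atTop (nhds 0)) :
    Tendsto
      (fun n => μ n {ω | ∃ i ∉ S₁ n, P n i ω < α n / ((1 - πhat n ω) * n)})
      atTop (nhds 0) := by
  set G : ∀ n, Set (Ω n) :=
    fun n => {ω | (1 - (1:ℝ)) * π n ≤ πhat n ω ∧ πhat n ω ≤ π n} with hG
  have hGmeas : ∀ n, MeasurableSet (G n) := by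
    intro n
    have : G n = πhat n ⁻¹' (Set.Icc ((1 - (1:ℝ)) * π n) (π n)) := rfl
    rw [this]
    exact (hπhatmeas n) measurableSet_Icc
  -- key bound
  have hbound : ∀ n, μ n {ω | ∃ i ∉ S₁ n, P n i ω < α n / ((1 - πhat n ω) * n)}
      ≤ (1 - μ n (G n)) + ENNReal.ofReal (α n) := by
    intro n
    by_cases hdeg : (S₁ n).card < n
    · have hn : 0 < n := lt_of_le_of_lt (Nat.zero_le _) hdeg
      have hπlt : π n < 1 := by
        rw [hπdef n]
        rw [div_lt_one (by exact_mod_cast hn)]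
        exact_mod_cast hdeg
      have hden : (0:ℝ) < (1 - π n) * n := by
        apply mul_pos (by linarith) (by exact_mod_cast hn)
      set t : ℝ := α n / ((1 - π n) * n) with ht
      have htpos : 0 < t := div_pos (hαpos n) hden
      -- cover
      have hcover : {ω | ∃ i ∉ S₁ n, P n i ω < α n / ((1 - πhat n ω) * n)}
          ⊆ (G n)ᶜ ∪ ⋃ i ∈ Finset.univ \ S₁ n, {ω | P n i ω < t} := by
        intro ω hω
        obtain ⟨i, hi, hlt⟩ := hω
        by_cases hωG : ω ∈ G n
        · right
          refine Set.mem_biUnion (Finset.mem_sdiff.mpr ⟨Finset.mem_univ i, hi⟩) ?_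
          have hle : πhat n ω ≤ π n := hωG.2
          have hden2 : (0:ℝ) < (1 - πhat n ω) * n := by
            apply mul_pos (by linarith) (by exact_mod_cast hn)
          have : α n / ((1 - πhat n ω) * n) ≤ t := by
            rw [ht]
            apply div_le_div_of_nonneg_left (le_of_lt (hαpos n)) hden
            apply mul_le_mul_of_nonneg_right (by linarith) (by positivity)
          exact lt_of_lt_of_le hlt this
        · exact Or.inl hωG
      refine le_trans (measure_mono hcover) ?_
      refine le_trans (measure_union_le _ _) ?_
      gcongr
      · rw [measure_compl (hGmeas n) (measure_ne_top _ _)]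
        simp
      · -- union bound
        refine le_trans (measure_biUnion_finset_le _ _) ?_
        have hterm : ∀ i ∈ Finset.univ \ S₁ n,
            μ n {ω | P n i ω < t} ≤ ENNReal.ofReal t := by
          intro i hi
          have hi' : i ∉ S₁ n := by simpa using hi
          have : {ω | P n i ω < t} = P n i ⁻¹' (Set.Iio t) := rfl
          rw [this, ← Measure.map_apply (hmeas n i) measurableSet_Iio, hunif n i hi',
            Measure.restrict_apply measurableSet_Iio]
          have hsub : Set.Iio t ∩ Set.Icc (0:ℝ) 1 ⊆ Set.Icc 0 t :=
            fun x hx => Set.mem_Icc.mpr ⟨hx.2.1, le_of_lt hx.1⟩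
          refine le_trans (measure_mono hsub) ?_
          rw [Real.volume_Icc]
          simp
        refine le_trans (Finset.sum_le_sum hterm) ?_
        rw [Finset.sum_const, nsmul_eq_mul]
        apply le_of_eq
        have hcard : ((Finset.univ \ S₁ n).card : ℝ) = (1 - π n) * n := by
          rw [Finset.card_sdiff_of_subset (Finset.subset_univ _), Finset.card_univ, Fintype.card_fin]
          rw [hπdef n]
          rw [Nat.cast_sub (le_of_lt hdeg)]
          field_simp
        calc ((Finset.univ \ S₁ n).card : ℝ≥0∞) * ENNReal.ofReal t
            = ENNReal.ofReal ((Finset.univ \ S₁ n).card : ℝ) * ENNReal.ofReal t := by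
              rw [ENNReal.ofReal_natCast]
          _ = ENNReal.ofReal (((Finset.univ \ S₁ n).card : ℝ) * t) := by
              rw [ENNReal.ofReal_mul (by positivity)]
          _ = ENNReal.ofReal (α n) := by
              rw [hcard, ht, mul_div_cancel₀ _ (ne_of_gt hden)]
    · -- degenerate: S₁ n = univ (or n = 0)
      have hfull : S₁ n = Finset.univ := by
        apply Finset.eq_univ_of_card
        have := (Finset.card_le_univ (S₁ n))
        simp only [Finset.card_univ, Fintype.card_fin] at *
        omega
      have : {ω | ∃ i ∉ S₁ n, P n i ω < α n / ((1 - πhat n ω) * n)} = (∅ : Set (Ω n)) := by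
        ext ω; simp [hfull]
      rw [this]
      simp
  -- limits
  have h1 : Tendsto (fun n => (1:ℝ≥0∞) - μ n (G n)) atTop (nhds 0) := by
    have h := ENNReal.Tendsto.sub (tendsto_const_nhds (x := (1:ℝ≥0∞)))
      (hcons 1 one_pos) (Or.inl ENNReal.one_ne_top)
    simpa [hG] using h
  have h2 : Tendsto (fun n => ENNReal.ofReal (α n)) atTop (nhds 0) := by
    have := ENNReal.tendsto_ofReal hα0
    simpa using this
  have hsum : Tendsto (fun n => (1 - μ n (G n)) + ENNReal.ofReal (α n)) atTop (nhds 0) := by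
    have := h1.add h2
    simpa using this
  exact tendsto_of_tendsto_of_tendsto_of_le_of_le tendsto_const_nhds hsum
    (fun n => zero_le) hbound
end
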